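/- Let K be a field, C a small K-linear category, and a a separability family for C. For each pair of objects x, y, choose a representation a x y = Σ_{i=1}^{n_{x,y}} f^i_{y,x} ⊗ g^i_{x,y} with f^i_{y,x} ∈ Hom_C(y,x) and g^i_{x,y} ∈ Hom_C(x,y) such that the family (g^i_{x,y})_{1 ≤ i ≤ n_{x,y}} is linearly independent over K, and let V_{y,x} ⊆ Hom_C(y,x) be the K-linear span of {f^i_{y,x} : 1 ≤ i ≤ n_{x,y}}. Then for every morphism f : x ⟶ z and every object y, postcomposition by f maps V_{y,x} into V_{y,z}; that is, f ∘ f^i_{y,x} ∈ V_{y,z} for all 1 ≤ i ≤ n_{x,y}. -/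

import Mathlib

open CategoryTheory TensorProduct

/-- Composition as a `K`-linear map out of the tensor product of Hom spaces:
`h ⊗ k ↦ h ∘ k = k ≫ h`. -/
noncomputable def compMap (K : Type*) [Field K] {C : Type*} [Category C] [Preadditive C]
    [Linear K C] (X Y Z : C) : ((Z ⟶ X) ⊗[K] (Y ⟶ Z)) →ₗ[K] (Y ⟶ X) :=
  TensorProduct.lift (LinearMap.mk₂ K (fun (h : Z ⟶ X) (k : Y ⟶ Z) => k ≫ h)
    (fun h h' k => by simp) (fun r h k => by simp)
    (fun h k k' => by simp) (fun r h k => by simp))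

/-- A separability family for a `K`-linear category `C`. -/
structure SeparabilityFamily (K : Type*) [Field K] (C : Type*) [Category C] [Preadditive C]
    [Linear K C] where
  a : ∀ x y : C, (y ⟶ x) ⊗[K] (x ⟶ y)
  finite_support : ∀ x : C, {y : C | a x y ≠ 0}.Finite
  sum_comp : ∀ x : C, (∑ᶠ y : C, compMap K x x y (a x y)) = 𝟙 x
  compat : ∀ {x z : C} (f : x ⟶ z) (y : C),
    LinearMap.rTensor (x ⟶ y) (Linear.rightComp K y f) (a x y)
      = LinearMap.lTensor (y ⟶ z) (Linear.leftComp K y f) (a z y)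

theorem aux_dual {K V ι : Type*} [Field K] [AddCommGroup V] [Module K V] {v : ι → V}
    [DecidableEq ι]
    (hs : LinearIndependent K v) (i : ι) :
    ∃ φ : V →ₗ[K] K, ∀ j, φ (v j) = if j = i then 1 else 0 := by
  have hbi : ∀ j, Module.Basis.sumExtend hs (Sum.inl j) = v j := by
    intro j
    simp [Module.Basis.sumExtend, Module.Basis.reindex_apply, Module.Basis.extend_apply_self,
      Equiv.Set.sumDiffSubset, Equiv.ofInjective, Equiv.Set.union, Equiv.Set.union',
      Equiv.ofLeftInverse, Equiv.sumCongr]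
    rfl
  refine ⟨(Module.Basis.sumExtend hs).coord (Sum.inl i), fun j => ?_⟩
  rw [← hbi j]
  classical
  simp [Module.Basis.coord_apply, Module.Basis.repr_self, Finsupp.single_apply]

/-- Given representations `a x y = Σ_i f^i ⊗ g^i` with the `g^i` linearly independent,
postcomposition by any `f : x ⟶ z` maps the span of the `f^i_{y,x}` into the span of the
`f^i_{y,z}`. -/
theorem comp_mem_span_sepFamily (K : Type*) [Field K]
    (C : Type*) [SmallCategory C] [Preadditive C] [Linear K C]
    (s : SeparabilityFamily K C)
    (n : C → C → ℕ)
    (F : ∀ x y : C, Fin (n x y) → (y ⟶ x))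
    (G : ∀ x y : C, Fin (n x y) → (x ⟶ y))
    (hG : ∀ x y : C, LinearIndependent K (G x y))
    (hFG : ∀ x y : C, s.a x y = ∑ i : Fin (n x y), (F x y i) ⊗ₜ[K] (G x y i)) :
    ∀ (x z : C) (f : x ⟶ z) (y : C) (i : Fin (n x y)),
      F x y i ≫ f ∈ Submodule.span K (Set.range (F z y)) := by
  intro x z f y i
  classical
  obtain ⟨φ, hφ⟩ := aux_dual (hG x y) i
  have hc := s.compat f y
  rw [hFG x y, hFG z y, map_sum, map_sum] at hc
  simp only [LinearMap.rTensor_tmul, LinearMap.lTensor_tmul] at hc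
  set L : (y ⟶ z) ⊗[K] (x ⟶ y) →ₗ[K] (y ⟶ z) :=
    (TensorProduct.rid K (y ⟶ z)).toLinearMap ∘ₗ LinearMap.lTensor (y ⟶ z) φ with hL
  have h2 := congrArg L hc
  simp only [hL, map_sum, LinearMap.coe_comp, Function.comp_apply,
    LinearMap.lTensor_tmul, LinearEquiv.coe_coe, TensorProduct.rid_tmul,
    Linear.rightComp_apply, Linear.leftComp_apply, hφ, ite_smul, one_smul, zero_smul,
    Finset.sum_ite_eq', Finset.mem_univ, if_true] at h2
  rw [h2]
  exact Submodule.sum_mem _ fun j _ =>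
    Submodule.smul_mem _ _ (Submodule.subset_span (Set.mem_range_self j))
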